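/- arXiv:0907.0158 — 6 statements merged into one kernel-verified Lean document; each statement's English description precedes it below -/
import Mathlib

section
/- For coprime positive integers q and r, in the group algebra ℤ[ℚ/ℤ] we have F_q · F_r = F_{qr}, where F_n = ∑_{β ∈ ℚ/ℤ, ord(β) = n} single β, the sum of the group-algebra basis elements indexed by the elements of ℚ/ℤ of exact additive order n. -/
noncomputable def F (n : ℕ) : AddMonoidAlgebra ℤ (AddCircle (1 : ℚ)) :=
  ∑ a ∈ (Finset.range n).filter (fun a => Nat.Coprime a n),
    AddMonoidAlgebra.single (((a : ℚ) / n : ℚ) : AddCircle (1 : ℚ)) 1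

lemma natCoe_circle_zero (k : ℕ) : (((k : ℚ)) : AddCircle (1 : ℚ)) = 0 := by
  rw [AddCircle.coe_eq_zero_iff]
  exact ⟨(k : ℤ), by simp⟩

lemma coe_add_div (q r a b : ℕ) (hq : 0 < q) (hr : 0 < r) :
    (((a : ℚ) / q : ℚ) : AddCircle (1 : ℚ)) + (((b : ℚ) / r : ℚ) : AddCircle (1 : ℚ)) =
      (((((a * r + b * q) % (q * r) : ℕ) : ℚ) / ((q * r : ℕ) : ℚ) : ℚ) : AddCircle (1 : ℚ)) := by
  have hq' : (q : ℚ) ≠ 0 := by exact_mod_cast hq.ne'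
  have hr' : (r : ℚ) ≠ 0 := by exact_mod_cast hr.ne'
  have hn' : ((q * r : ℕ) : ℚ) ≠ 0 := by
    push_cast; exact mul_ne_zero hq' hr'
  have hmod : ((a * r + b * q) % (q * r) : ℕ) + (q * r) * ((a * r + b * q) / (q * r)) =
      a * r + b * q := Nat.mod_add_div _ _
  have hQ : (a : ℚ) / q + (b : ℚ) / r =
      ((((a * r + b * q) % (q * r) : ℕ) : ℚ) / ((q * r : ℕ) : ℚ)) +
        (((a * r + b * q) / (q * r) : ℕ) : ℚ) := by
    have h2 : ((((a * r + b * q) % (q * r) : ℕ)) : ℚ) +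
        ((q : ℚ) * r) * (((a * r + b * q) / (q * r) : ℕ) : ℚ) = (a : ℚ) * r + (b : ℚ) * q := by
      exact_mod_cast congrArg (fun x : ℕ => (x : ℚ)) hmod
    field_simp
    push_cast at h2
    push_cast
    linear_combination (-((q : ℚ) * r)) * h2
  rw [← AddCircle.coe_add, hQ, AddCircle.coe_add, natCoe_circle_zero, add_zero]

theorem stmt_1 (q r : ℕ) (hq : 0 < q) (hr : 0 < r) (h : Nat.Coprime q r) :
    F q * F r = F (q * r) := by
  classical
  have hqr : 0 < q * r := Nat.mul_pos hq hr
  unfold F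
  rw [Finset.sum_mul_sum, ← Finset.sum_product']
  refine Finset.sum_bij (fun p _ => (p.1 * r + p.2 * q) % (q * r)) ?_ ?_ ?_ ?_
  · rintro ⟨a, b⟩ hab
    rw [Finset.mem_product, Finset.mem_filter, Finset.mem_filter, Finset.mem_range,
      Finset.mem_range] at hab
    obtain ⟨⟨ha, haq⟩, hb, hbr⟩ := hab
    rw [Finset.mem_filter, Finset.mem_range]
    refine ⟨Nat.mod_lt _ hqr, ?_⟩
    have hco : Nat.Coprime (a * r + b * q) (q * r) := by
      refine Nat.Coprime.mul_right ?_ ?_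
      · have : Nat.Coprime (a * r + b * q) q := by
          rw [Nat.coprime_add_mul_right_left]
          exact Nat.Coprime.mul haq (Nat.coprime_comm.mp h)
        exact this
      · have : Nat.Coprime (b * q + a * r) r := by
          rw [Nat.coprime_add_mul_right_left]
          exact Nat.Coprime.mul hbr h
        rwa [add_comm] at this
    unfold Nat.Coprime
    rw [← Nat.gcd_rec]
    exact Nat.coprime_comm.mp hco
  · rintro ⟨a, b⟩ hab ⟨a', b'⟩ hab' heq
    rw [Finset.mem_product, Finset.mem_filter, Finset.mem_filter, Finset.mem_range,
      Finset.mem_range] at hab hab'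
    obtain ⟨⟨ha, haq⟩, hb, hbr⟩ := hab
    obtain ⟨⟨ha', haq'⟩, hb', hbr'⟩ := hab'
    have hmod : (a * r + b * q) ≡ (a' * r + b' * q) [MOD q * r] := by
      unfold Nat.ModEq
      simpa using heq
    have hq' : (a * r + b * q) ≡ (a' * r + b' * q) [MOD q] :=
      hmod.of_mul_right r
    have hr' : (a * r + b * q) ≡ (a' * r + b' * q) [MOD r] :=
      hmod.of_mul_left q
    have hb0 : b * q ≡ 0 [MOD q] := Nat.modEq_zero_iff_dvd.mpr (dvd_mul_left q b)
    have hb0' : b' * q ≡ 0 [MOD q] := Nat.modEq_zero_iff_dvd.mpr (dvd_mul_left q b')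
    have ha0 : a * r ≡ 0 [MOD r] := Nat.modEq_zero_iff_dvd.mpr (dvd_mul_left r a)
    have ha0' : a' * r ≡ 0 [MOD r] := Nat.modEq_zero_iff_dvd.mpr (dvd_mul_left r a')
    have haa : a ≡ a' [MOD q] := by
      have h1 : a * r ≡ a' * r [MOD q] := by
        calc a * r ≡ a * r + 0 [MOD q] := by rw [add_zero]
          _ ≡ a * r + b * q [MOD q] := Nat.ModEq.add_left _ hb0.symm
          _ ≡ a' * r + b' * q [MOD q] := hq'
          _ ≡ a' * r + 0 [MOD q] := Nat.ModEq.add_left _ hb0'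
          _ = a' * r := by rw [add_zero]
      exact Nat.ModEq.cancel_right_of_coprime h h1
    have hbb : b ≡ b' [MOD r] := by
      have h1 : b * q ≡ b' * q [MOD r] := by
        calc b * q ≡ 0 + b * q [MOD r] := by rw [zero_add]
          _ ≡ a * r + b * q [MOD r] := Nat.ModEq.add_right _ ha0.symm
          _ ≡ a' * r + b' * q [MOD r] := hr'
          _ ≡ 0 + b' * q [MOD r] := Nat.ModEq.add_right _ ha0'
          _ = b' * q := by rw [zero_add]
      exact Nat.ModEq.cancel_right_of_coprime (Nat.Coprime.symm h) h1
    have : a = a' := by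
      have := haa
      unfold Nat.ModEq at this
      rwa [Nat.mod_eq_of_lt ha, Nat.mod_eq_of_lt ha'] at this
    have hbeq : b = b' := by
      have := hbb
      unfold Nat.ModEq at this
      rwa [Nat.mod_eq_of_lt hb, Nat.mod_eq_of_lt hb'] at this
    simp [this, hbeq]
  · intro c hc
    rw [Finset.mem_filter, Finset.mem_range] at hc
    obtain ⟨hclt, hcco⟩ := hc
    haveI : NeZero q := ⟨hq.ne'⟩
    haveI : NeZero r := ⟨hr.ne'⟩
    have hcq : Nat.Coprime c q := Nat.Coprime.coprime_dvd_right ⟨r, rfl⟩ hcco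
    have hcr : Nat.Coprime c r := Nat.Coprime.coprime_dvd_right ⟨q, mul_comm q r⟩ hcco
    have hrq : IsUnit ((r : ZMod q)) := (ZMod.isUnit_iff_coprime r q).mpr (Nat.coprime_comm.mp h)
    have hqr' : IsUnit ((q : ZMod r)) := (ZMod.isUnit_iff_coprime q r).mpr h
    set a : ℕ := ((c : ZMod q) * (r : ZMod q)⁻¹).val with ha_def
    set b : ℕ := ((c : ZMod r) * (q : ZMod r)⁻¹).val with hb_def
    have haq : (a : ZMod q) = (c : ZMod q) * (r : ZMod q)⁻¹ := by
      simp [ha_def, ZMod.natCast_val, ZMod.cast_id]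
    have hbq : (b : ZMod r) = (c : ZMod r) * (q : ZMod r)⁻¹ := by
      simp [hb_def, ZMod.natCast_val, ZMod.cast_id]
    have har : (a : ZMod q) * r = (c : ZMod q) := by
      rw [haq, mul_assoc, ZMod.inv_mul_of_unit _ hrq, mul_one]
    have hbr2 : (b : ZMod r) * q = (c : ZMod r) := by
      rw [hbq, mul_assoc, ZMod.inv_mul_of_unit _ hqr', mul_one]
    have harM : a * r ≡ c [MOD q] := by
      have := (ZMod.natCast_eq_natCast_iff (a * r) c q).mp (by push_cast; exact har)
      exact this
    have hbrM : b * q ≡ c [MOD r] := by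
      have := (ZMod.natCast_eq_natCast_iff (b * q) c r).mp (by push_cast; exact hbr2)
      exact this
    have haco : Nat.Coprime a q := by
      have h1 : Nat.gcd (a * r) q = Nat.gcd c q := Nat.ModEq.gcd_eq harM
      have : Nat.Coprime (a * r) q := by unfold Nat.Coprime; rw [h1]; exact hcq
      exact Nat.Coprime.coprime_dvd_left (dvd_mul_right a r) this
    have hbco : Nat.Coprime b r := by
      have h1 : Nat.gcd (b * q) r = Nat.gcd c r := Nat.ModEq.gcd_eq hbrM
      have : Nat.Coprime (b * q) r := by unfold Nat.Coprime; rw [h1]; exact hcr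
      exact Nat.Coprime.coprime_dvd_left (dvd_mul_right b q) this
    refine ⟨⟨a, b⟩, ?_, ?_⟩
    · rw [Finset.mem_product, Finset.mem_filter, Finset.mem_filter, Finset.mem_range,
        Finset.mem_range]
      exact ⟨⟨ZMod.val_lt _, haco⟩, ZMod.val_lt _, hbco⟩
    · have hMq : a * r + b * q ≡ c [MOD q] := by
        calc a * r + b * q ≡ a * r + 0 [MOD q] :=
              Nat.ModEq.add_left _ (Nat.modEq_zero_iff_dvd.mpr (dvd_mul_left q b))
          _ = a * r := by ring
          _ ≡ c [MOD q] := harM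
      have hMr : a * r + b * q ≡ c [MOD r] := by
        calc a * r + b * q ≡ 0 + b * q [MOD r] :=
              Nat.ModEq.add_right _ (Nat.modEq_zero_iff_dvd.mpr (dvd_mul_left r a))
          _ = b * q := by ring
          _ ≡ c [MOD r] := hbrM
      have : a * r + b * q ≡ c [MOD q * r] :=
        (Nat.modEq_and_modEq_iff_modEq_mul h).mp ⟨hMq, hMr⟩
      have := this.symm
      unfold Nat.ModEq at this
      rw [Nat.mod_eq_of_lt hclt] at this
      exact this.symm
  · rintro ⟨a, b⟩ hab
    rw [AddMonoidAlgebra.single_mul_single, one_mul]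
    congr 1
    exact coe_add_div q r a b hq hr
end

section
/- Let p be prime and α < β positive integers. Then in the group ring ℤ[ℚ/ℤ], F_{p^α} · F_{p^β} = φ(p^α) · F_{p^β}, where φ is Euler's totient function. -/
open Finset AddMonoidAlgebra

noncomputable def phiC (N : ℕ) (x : ZMod N) : AddCircle (1 : ℚ) :=
  ((x.val : ℚ) / N : ℚ)

lemma circ_eq {x y : ℚ} (n : ℤ) (h : x - y = n) :
    ((x : ℚ) : AddCircle (1 : ℚ)) = (y : AddCircle (1 : ℚ)) := by
  have h0 : ((x - y : ℚ) : AddCircle (1 : ℚ)) = 0 := by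
    rw [AddCircle.coe_eq_zero_iff]
    exact ⟨n, by simp [h]⟩
  rw [show ((x - y : ℚ) : AddCircle (1 : ℚ)) = (x : AddCircle (1:ℚ)) - y from
    QuotientAddGroup.mk_sub _ x y] at h0
  exact sub_eq_zero.mp h0

lemma phiC_natCast (N : ℕ) [NeZero N] (j : ℕ) :
    phiC N (j : ZMod N) = (((j : ℚ) / N : ℚ) : AddCircle (1 : ℚ)) := by
  unfold phiC
  rw [ZMod.val_natCast]
  refine circ_eq (-(j / N : ℕ) : ℤ) ?_
  have hN : (N : ℚ) ≠ 0 := Nat.cast_ne_zero.mpr (NeZero.ne N)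
  have hq : ((j % N : ℕ) : ℚ) + (N : ℚ) * ((j / N : ℕ) : ℚ) = (j : ℚ) := by
    exact_mod_cast congrArg (fun t : ℕ => (t : ℚ)) (Nat.mod_add_div j N)
  simp only [Int.cast_neg, Int.cast_natCast]
  field_simp
  linarith

lemma phiC_add (N : ℕ) [NeZero N] (x y : ZMod N) :
    phiC N (x + y) = phiC N x + phiC N y := by
  have hx : ((x.val : ℕ) : ZMod N) = x := ZMod.natCast_rightInverse x
  have hy : ((y.val : ℕ) : ZMod N) = y := ZMod.natCast_rightInverse y
  have : x + y = ((x.val + y.val : ℕ) : ZMod N) := by push_cast [hx, hy]; ring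
  rw [this, phiC_natCast]
  unfold phiC
  rw [show (((x.val + y.val : ℕ) : ℚ) / N : ℚ) = (x.val : ℚ)/N + (y.val : ℚ)/N by
    push_cast; ring]
  exact QuotientAddGroup.mk_add _ _ _

lemma F_eq (N : ℕ) [NeZero N] :
    F N = ∑ x ∈ Finset.univ.filter (fun x : ZMod N => IsUnit x),
      AddMonoidAlgebra.single (phiC N x) (1 : ℤ) := by
  unfold F
  refine Finset.sum_nbij' (fun a => (a : ZMod N)) (fun x => x.val) ?_ ?_ ?_ ?_ ?_
  · intro a ha
    simp only [mem_filter, mem_range] at ha ⊢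
    exact ⟨mem_univ _, (ZMod.isUnit_iff_coprime a N).mpr ha.2⟩
  · intro x hx
    simp only [mem_filter, mem_range, mem_univ] at hx ⊢
    refine ⟨ZMod.val_lt x, ?_⟩
    exact (ZMod.isUnit_iff_coprime x.val N).mp
      (by rw [ZMod.natCast_rightInverse x]; exact hx.2)
  · intro a ha
    simp only [mem_filter, mem_range] at ha
    exact ZMod.val_natCast_of_lt ha.1
  · intro x _
    exact ZMod.natCast_rightInverse x
  · intro a _
    rw [phiC_natCast]

lemma isUnit_add_iff (p : ℕ) (hp : p.Prime) (β : ℕ) (hβ : 0 < β) (k : ℕ) (hk : p ∣ k)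
    (x : ZMod (p ^ β)) :
    haveI : NeZero (p ^ β) := ⟨pow_ne_zero _ hp.pos.ne'⟩
    IsUnit (((k : ℕ) : ZMod (p ^ β)) + x) ↔ IsUnit x := by
  haveI : NeZero (p ^ β) := ⟨pow_ne_zero _ hp.pos.ne'⟩
  have hdvdN : p ∣ p ^ β := dvd_pow_self p hβ.ne'
  have key : ∀ y : ZMod (p ^ β), IsUnit y ↔ ¬ p ∣ y.val := by
    intro y
    rw [← ZMod.natCast_rightInverse y, ZMod.isUnit_iff_coprime,
      Nat.coprime_pow_right_iff hβ, Nat.coprime_comm, hp.coprime_iff_not_dvd,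
      ZMod.natCast_rightInverse y]
  rw [key, key]
  have hc : p ∣ ((k : ZMod (p ^ β)).val) := by
    rw [ZMod.val_natCast]
    exact (Nat.dvd_mod_iff hdvdN).mpr hk
  have hval : ((k : ZMod (p ^ β)) + x).val = ((k : ZMod (p ^ β)).val + x.val) % (p ^ β) :=
    ZMod.val_add _ _
  rw [hval, Nat.dvd_mod_iff hdvdN]
  constructor
  · intro h hx; exact h (Nat.dvd_add hc hx)
  · intro h hx; exact h ((Nat.dvd_add_right hc).mp hx)

theorem stmt_2 (p : ℕ) (hp : p.Prime) (α β : ℕ) (hα : 0 < α) (hαβ : α < β) :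
    F (p ^ α) * F (p ^ β) = (Nat.totient (p ^ α) : ℤ) • F (p ^ β) := by
  haveI : NeZero (p ^ β) := ⟨pow_ne_zero _ hp.pos.ne'⟩
  set N := p ^ β with hN
  set m := β - α with hm
  have hm0 : 0 < m := Nat.sub_pos_of_lt hαβ
  have hNn : N = p ^ α * p ^ m := by rw [hN, hm, ← pow_add, Nat.add_sub_cancel' hαβ.le]
  have hpm : ((p : ℚ) ^ m) ≠ 0 := pow_ne_zero _ (Nat.cast_ne_zero.mpr hp.pos.ne')
  -- rewrite the second factor
  rw [F_eq N]
  -- expand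
  conv_lhs => rw [F]
  rw [Finset.sum_mul]
  have hmain : ∀ a ∈ (Finset.range (p^α)).filter (fun a => Nat.Coprime a (p^α)),
      (AddMonoidAlgebra.single (((a : ℚ) / ((p^α : ℕ) : ℚ) : ℚ) : AddCircle (1 : ℚ)) (1:ℤ)) *
        (∑ x ∈ Finset.univ.filter (fun x : ZMod N => IsUnit x),
          AddMonoidAlgebra.single (phiC N x) (1 : ℤ)) =
      ∑ x ∈ Finset.univ.filter (fun x : ZMod N => IsUnit x),
          AddMonoidAlgebra.single (phiC N x) (1 : ℤ) := by
    intro a _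
    rw [Finset.mul_sum]
    have hcoe : (((a : ℚ) / ((p^α : ℕ) : ℚ) : ℚ) : AddCircle (1 : ℚ)) = phiC N ((a * p ^ m : ℕ) : ZMod N) := by
      rw [phiC_natCast]
      congr 1
      rw [hNn]
      push_cast
      rw [mul_div_mul_right _ _ hpm]
    have step : ∀ x : ZMod N,
        (AddMonoidAlgebra.single (((a : ℚ) / ((p^α : ℕ) : ℚ) : ℚ) : AddCircle (1 : ℚ)) (1:ℤ)) *
          AddMonoidAlgebra.single (phiC N x) (1 : ℤ) =
        AddMonoidAlgebra.single (phiC N (((a * p ^ m : ℕ) : ZMod N) + x)) (1 : ℤ) := by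
      intro x
      rw [AddMonoidAlgebra.single_mul_single, one_mul, hcoe, phiC_add]
    calc ∑ x ∈ Finset.univ.filter (fun x : ZMod N => IsUnit x),
          (AddMonoidAlgebra.single (((a : ℚ) / ((p^α : ℕ) : ℚ) : ℚ) : AddCircle (1 : ℚ)) (1:ℤ)) *
            AddMonoidAlgebra.single (phiC N x) (1 : ℤ)
        = ∑ x ∈ Finset.univ.filter (fun x : ZMod N => IsUnit x),
            AddMonoidAlgebra.single (phiC N (((a * p ^ m : ℕ) : ZMod N) + x)) (1 : ℤ) := by
          exact Finset.sum_congr rfl (fun x _ => step x)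
      _ = ∑ x ∈ Finset.univ.filter (fun x : ZMod N => IsUnit x),
            AddMonoidAlgebra.single (phiC N x) (1 : ℤ) := by
          refine Finset.sum_equiv (Equiv.addLeft (((a * p ^ m : ℕ) : ZMod N))) ?_ ?_
          · intro x
            simp only [Finset.mem_filter, Finset.mem_univ, true_and, Equiv.coe_addLeft]
            exact (isUnit_add_iff p hp β (hα.trans hαβ) (a * p ^ m)
              (Dvd.dvd.mul_left (dvd_pow_self p hm0.ne') a) x).symm
          · intro x _
            rfl
  rw [Finset.sum_congr rfl hmain, Finset.sum_const]
  rw [← F_eq N]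
  have hcard : ((Finset.range (p^α)).filter (fun a => Nat.Coprime a (p^α))).card
      = Nat.totient (p^α) := by
    rw [Nat.totient]
    congr 1
    apply Finset.filter_congr
    intro a _
    simp [Nat.coprime_comm]
  rw [hcard, natCast_zsmul]
end

section
/- Let q and r be positive integers, d = gcd(q, r), and suppose that the largest divisor of d coprime to both q/d and r/d equals 1 (i.e., every prime dividing d also divides q/d or r/d). Then in the group ring ℤ[ℚ/ℤ], F_q · F_r = φ(d) · F_{qr/d}. -/
open Finset

private lemma cop_mod {x n : ℕ} (h : Nat.Coprime x n) : Nat.Coprime (x % n) n := by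
  unfold Nat.Coprime at *
  rw [← Nat.gcd_rec]
  rwa [Nat.gcd_comm] at h

private lemma coprime_sum (d q' r' : ℕ)
    (hco : Nat.Coprime q' r')
    (hyp : ∀ p : ℕ, p.Prime → p ∣ d → p ∣ q' ∨ p ∣ r')
    (a b : ℕ) (ha : Nat.Coprime a (d * q')) (hb : Nat.Coprime b (d * r')) :
    Nat.Coprime (a * r' + b * q') (d * q' * r') := by
  by_contra hcon
  have hpp : (Nat.gcd (a * r' + b * q') (d * q' * r')).minFac.Prime :=
    Nat.minFac_prime hcon
  set p := (Nat.gcd (a * r' + b * q') (d * q' * r')).minFac with hp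
  have h1 : p ∣ a * r' + b * q' :=
    (Nat.minFac_dvd _).trans (Nat.gcd_dvd_left _ _)
  have h2 : p ∣ d * q' * r' :=
    (Nat.minFac_dvd _).trans (Nat.gcd_dvd_right _ _)
  have hcase : p ∣ q' ∨ p ∣ r' := by
    rcases hpp.dvd_mul.mp h2 with h3 | h3
    · rcases hpp.dvd_mul.mp h3 with h4 | h4
      · exact hyp p hpp h4
      · exact Or.inl h4
    · exact Or.inr h3
  rcases hcase with h4 | h4
  · have hpr' : ¬ p ∣ r' := fun hh =>
      hpp.ne_one (Nat.dvd_one.mp (hco ▸ Nat.dvd_gcd h4 hh))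
    have hpa : ¬ p ∣ a := fun hh =>
      hpp.ne_one (Nat.dvd_one.mp (ha ▸ Nat.dvd_gcd hh (Dvd.dvd.mul_left h4 d)))
    have h5 : p ∣ a * r' := by
      have := Nat.dvd_sub h1 (Dvd.dvd.mul_left h4 b)
      rwa [Nat.add_sub_cancel] at this
    rcases hpp.dvd_mul.mp h5 with h6 | h6
    · exact hpa h6
    · exact hpr' h6
  · have hpq' : ¬ p ∣ q' := fun hh =>
      hpp.ne_one (Nat.dvd_one.mp (hco ▸ Nat.dvd_gcd hh h4))
    have hpb : ¬ p ∣ b := fun hh =>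
      hpp.ne_one (Nat.dvd_one.mp (hb ▸ Nat.dvd_gcd hh (Dvd.dvd.mul_left h4 d)))
    have h5 : p ∣ b * q' := by
      have := Nat.dvd_sub h1 (Dvd.dvd.mul_left h4 a)
      rwa [Nat.add_sub_cancel_left] at this
    rcases hpp.dvd_mul.mp h5 with h6 | h6
    · exact hpb h6
    · exact hpq' h6

private lemma modcast {m : ℕ} (qq s : ℕ) (hm : qq * s = m) (x : ℕ) :
    ((x % qq : ℕ) : ZMod m) * (s : ZMod m) = (x : ℕ) * (s : ZMod m) := by
  have h0 : ((qq : ℕ) : ZMod m) * (s : ZMod m) = 0 := by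
    rw [← Nat.cast_mul, hm, ZMod.natCast_self]
  have hx : ((x : ℕ) : ZMod m) = ((qq * (x / qq) + x % qq : ℕ) : ZMod m) := by
    rw [Nat.div_add_mod]
  rw [hx, Nat.cast_add, Nat.cast_mul, add_mul]
  linear_combination (-((x / qq : ℕ) : ZMod m)) * h0

private def Aset (n : ℕ) : Finset ℕ := (Finset.range n).filter (fun a => Nat.Coprime a n)

private lemma Aset_card (n : ℕ) : (Aset n).card = Nat.totient n := by
  rw [Nat.totient]
  congr 1
  exact Finset.filter_congr (fun a _ => Nat.coprime_comm)

private lemma mem_Aset {n a : ℕ} : a ∈ Aset n ↔ a < n ∧ Nat.Coprime a n := by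
  simp [Aset]

private lemma inv_comp {n : ℕ} (w w' a : ℕ) (ha : a < n)
    (h2 : ((w' * w : ℕ) : ZMod n) = ((1 : ℕ) : ZMod n)) :
    (w' * ((w * a) % n)) % n = a := by
  have hm : (((w * a) % n : ℕ) : ZMod n) = ((w * a : ℕ) : ZMod n) := by
    rw [ZMod.natCast_eq_natCast_iff']
    exact Nat.mod_mod_of_dvd _ dvd_rfl
  rw [Nat.cast_mul, Nat.cast_one] at h2
  have h1 : ((w' * ((w * a) % n) : ℕ) : ZMod n) = ((a : ℕ) : ZMod n) := by
    rw [Nat.cast_mul, hm, Nat.cast_mul]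
    linear_combination ((a : ℕ) : ZMod n) * h2
  have := (ZMod.natCast_eq_natCast_iff' _ _ _).mp h1
  rwa [Nat.mod_eq_of_lt ha] at this

section counting

variable (d q' r' : ℕ)

private def fib (c : ℕ) : Finset (ℕ × ℕ) :=
  ((Aset (d * q') ×ˢ Aset (d * r')).filter
    (fun p => (p.1 * r' + p.2 * q') % (d * q' * r') = c))

private lemma fib_maps (hd : 0 < d) (hq' : 0 < q') (hr' : 0 < r')
    (v c c' : ℕ) (hvm : Nat.Coprime v (d * q' * r')) (hcm : c < d * q' * r')
    (hcm' : c' < d * q' * r')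
    (hvc : ((v * c : ℕ) : ZMod (d * q' * r')) = ((c' : ℕ) : ZMod (d * q' * r'))) :
    ∀ p ∈ fib d q' r' c,
      ((v * p.1) % (d * q'), (v * p.2) % (d * r')) ∈ fib d q' r' c' := by
  rintro ⟨a, b⟩ hp
  rw [fib, Finset.mem_filter, Finset.mem_product, mem_Aset, mem_Aset] at hp
  obtain ⟨⟨⟨haq, hacop⟩, hbr, hbcop⟩, hfib⟩ := hp
  have hqpos : 0 < d * q' := by positivity
  have hrpos : 0 < d * r' := by positivity
  have hmpos : 0 < d * q' * r' := by positivity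
  have hqm : (d * q') * r' = d * q' * r' := rfl
  have hrm : (d * r') * q' = d * q' * r' := by ring
  have hqdvd : (d * q') ∣ (d * q' * r') := ⟨r', rfl⟩
  have hrdvd : (d * r') ∣ (d * q' * r') := ⟨q', by ring⟩
  rw [fib, Finset.mem_filter, Finset.mem_product, mem_Aset, mem_Aset]
  refine ⟨⟨⟨Nat.mod_lt _ hqpos, ?_⟩, Nat.mod_lt _ hrpos, ?_⟩, ?_⟩
  · exact cop_mod (Nat.Coprime.mul (hvm.coprime_dvd_right hqdvd) hacop)
  · exact cop_mod (Nat.Coprime.mul (hvm.coprime_dvd_right hrdvd) hbcop)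
  · -- fiber condition
    have hfibz : ((a * r' + b * q' : ℕ) : ZMod (d * q' * r')) = ((c : ℕ) : ZMod (d * q' * r')) := by
      rw [ZMod.natCast_eq_natCast_iff', Nat.mod_eq_of_lt hcm]
      exact hfib
    have hcast :
        ((((v * a) % (d * q')) * r' + ((v * b) % (d * r')) * q' : ℕ) : ZMod (d * q' * r'))
          = ((c' : ℕ) : ZMod (d * q' * r')) := by
      rw [Nat.cast_add, Nat.cast_mul, Nat.cast_mul,
        modcast (d * q') r' hqm, modcast (d * r') q' hrm]
      rw [Nat.cast_mul, Nat.cast_mul]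
      rw [Nat.cast_add, Nat.cast_mul, Nat.cast_mul] at hfibz
      rw [Nat.cast_mul] at hvc
      linear_combination ((v : ℕ) : ZMod (d * q' * r')) * hfibz + hvc
    have := (ZMod.natCast_eq_natCast_iff' _ _ _).mp hcast
    rwa [Nat.mod_eq_of_lt hcm'] at this

private lemma fib_eq (hd : 0 < d) (hq' : 0 < q') (hr' : 0 < r')
    (c c' : ℕ) (hc : Nat.Coprime c (d * q' * r')) (hc' : Nat.Coprime c' (d * q' * r'))
    (hcm : c < d * q' * r') (hcm' : c' < d * q' * r') :
    (fib d q' r' c).card = (fib d q' r' c').card := by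
  have hmpos : 0 < d * q' * r' := by positivity
  haveI : NeZero (d * q' * r') := ⟨hmpos.ne'⟩
  set m := d * q' * r' with hmdef
  set A : (ZMod m)ˣ := ZMod.unitOfCoprime c hc with hA
  set B : (ZMod m)ˣ := ZMod.unitOfCoprime c' hc' with hB
  set u : (ZMod m)ˣ := B * A⁻¹ with hu
  set w := ((u : (ZMod m)ˣ) : ZMod m).val with hwdef
  set w' := ((u⁻¹ : (ZMod m)ˣ) : ZMod m).val with hw'def
  have hwc : Nat.Coprime w m := ZMod.val_coe_unit_coprime u
  have hw'c : Nat.Coprime w' m := ZMod.val_coe_unit_coprime u⁻¹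
  have hwcast : ((w : ℕ) : ZMod m) = (u : ZMod m) := by
    rw [hwdef, ZMod.natCast_val, ZMod.cast_id]
  have hw'cast : ((w' : ℕ) : ZMod m) = ((u⁻¹ : (ZMod m)ˣ) : ZMod m) := by
    rw [hw'def, ZMod.natCast_val, ZMod.cast_id]
  have hvc : ((w * c : ℕ) : ZMod m) = ((c' : ℕ) : ZMod m) := by
    rw [Nat.cast_mul, hwcast, ← ZMod.coe_unitOfCoprime c hc, ← ZMod.coe_unitOfCoprime c' hc',
      ← hA, ← hB]
    rw [show (u : ZMod m) * ((A : (ZMod m)ˣ) : ZMod m) = ((u * A : (ZMod m)ˣ) : ZMod m) from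
      (Units.val_mul _ _).symm]
    congr 1
    rw [hu]
    exact inv_mul_cancel_right B A
  have hv'c : ((w' * c' : ℕ) : ZMod m) = ((c : ℕ) : ZMod m) := by
    rw [Nat.cast_mul, hw'cast, ← ZMod.coe_unitOfCoprime c hc, ← ZMod.coe_unitOfCoprime c' hc',
      ← hA, ← hB]
    rw [show ((u⁻¹ : (ZMod m)ˣ) : ZMod m) * ((B : (ZMod m)ˣ) : ZMod m)
        = ((u⁻¹ * B : (ZMod m)ˣ) : ZMod m) from (Units.val_mul _ _).symm]
    congr 1
    rw [hu, mul_inv_rev, inv_inv]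
    exact inv_mul_cancel_right A B
  have hmulm : ((w' * w : ℕ) : ZMod m) = ((1 : ℕ) : ZMod m) := by
    rw [Nat.cast_mul, hwcast, hw'cast, ← Units.val_mul, inv_mul_cancel, Units.val_one,
      Nat.cast_one]
  have hmulm' : ((w * w' : ℕ) : ZMod m) = ((1 : ℕ) : ZMod m) := by
    rw [Nat.cast_mul, hwcast, hw'cast, ← Units.val_mul, mul_inv_cancel, Units.val_one,
      Nat.cast_one]
  have hqdvd : (d * q') ∣ m := ⟨r', rfl⟩
  have hrdvd : (d * r') ∣ m := ⟨q', by rw [hmdef]; ring⟩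
  have hq1 : ((w' * w : ℕ) : ZMod (d * q')) = ((1 : ℕ) : ZMod (d * q')) := by
    rw [ZMod.natCast_eq_natCast_iff] at hmulm ⊢
    exact Nat.ModEq.of_dvd hqdvd hmulm
  have hr1 : ((w' * w : ℕ) : ZMod (d * r')) = ((1 : ℕ) : ZMod (d * r')) := by
    rw [ZMod.natCast_eq_natCast_iff] at hmulm ⊢
    exact Nat.ModEq.of_dvd hrdvd hmulm
  have hq1' : ((w * w' : ℕ) : ZMod (d * q')) = ((1 : ℕ) : ZMod (d * q')) := by
    rw [ZMod.natCast_eq_natCast_iff] at hmulm' ⊢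
    exact Nat.ModEq.of_dvd hqdvd hmulm'
  have hr1' : ((w * w' : ℕ) : ZMod (d * r')) = ((1 : ℕ) : ZMod (d * r')) := by
    rw [ZMod.natCast_eq_natCast_iff] at hmulm' ⊢
    exact Nat.ModEq.of_dvd hrdvd hmulm'
  apply Finset.card_nbij' (fun p => ((w * p.1) % (d * q'), (w * p.2) % (d * r')))
    (fun p => ((w' * p.1) % (d * q'), (w' * p.2) % (d * r')))
  · exact fib_maps d q' r' hd hq' hr' w c c' hwc hcm hcm' hvc
  · exact fib_maps d q' r' hd hq' hr' w' c' c hw'c hcm' hcm hv'c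
  · rintro ⟨a, b⟩ hp
    rw [fib, Finset.mem_coe, Finset.mem_filter, Finset.mem_product, mem_Aset, mem_Aset] at hp
    obtain ⟨⟨⟨haq, _⟩, hbr, _⟩, _⟩ := hp
    exact Prod.ext (inv_comp w w' a haq hq1) (inv_comp w w' b hbr hr1)
  · rintro ⟨a, b⟩ hp
    rw [fib, Finset.mem_coe, Finset.mem_filter, Finset.mem_product, mem_Aset, mem_Aset] at hp
    obtain ⟨⟨⟨haq, _⟩, hbr, _⟩, _⟩ := hp
    exact Prod.ext (inv_comp w' w a haq hq1') (inv_comp w' w b hbr hr1')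

end counting

private lemma fib_card (d q' r' : ℕ) (hd : 0 < d) (hq' : 0 < q') (hr' : 0 < r')
    (hco : Nat.Coprime q' r')
    (hyp : ∀ p : ℕ, p.Prime → p ∣ d → p ∣ q' ∨ p ∣ r')
    (c : ℕ) (hcm : c < d * q' * r') (hc : Nat.Coprime c (d * q' * r')) :
    (fib d q' r' c).card = Nat.totient d := by
  have hmpos : 0 < d * q' * r' := by positivity
  have hmaps : ∀ p ∈ Aset (d * q') ×ˢ Aset (d * r'),
      (p.1 * r' + p.2 * q') % (d * q' * r') ∈ Aset (d * q' * r') := by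
    rintro ⟨a, b⟩ hp
    rw [Finset.mem_product, mem_Aset, mem_Aset] at hp
    obtain ⟨⟨haq, hacop⟩, hbr, hbcop⟩ := hp
    rw [mem_Aset]
    exact ⟨Nat.mod_lt _ hmpos, cop_mod (coprime_sum d q' r' hco hyp a b hacop hbcop)⟩
  have hsum := Finset.card_eq_sum_card_fiberwise hmaps
  rw [Finset.card_product, Aset_card, Aset_card] at hsum
  have hconst : ∀ c' ∈ Aset (d * q' * r'),
      ((Aset (d * q') ×ˢ Aset (d * r')).filter
        (fun p => (p.1 * r' + p.2 * q') % (d * q' * r') = c')).card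
        = (fib d q' r' c).card := by
    intro c' hc'
    rw [mem_Aset] at hc'
    exact fib_eq d q' r' hd hq' hr' c' c hc'.2 hc hc'.1 hcm
  rw [Finset.sum_congr rfl hconst, Finset.sum_const, Aset_card, smul_eq_mul] at hsum
  -- totient identities
  have hgcd : Nat.gcd (d * q') (d * r') = d := by
    rw [Nat.gcd_mul_left, hco, mul_one]
  have h1 := Nat.totient_gcd_mul_totient_mul (d * q') (d * r')
  rw [hgcd] at h1
  have hdm : (d * q') * (d * r') = d * (d * q' * r') := by ring
  rw [hdm] at h1
  have hgdm : Nat.gcd d (d * q' * r') = d := Nat.gcd_eq_left ⟨q' * r', by ring⟩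
  have h2 := Nat.totient_gcd_mul_totient_mul d (d * q' * r')
  rw [hgdm] at h2
  have hφd : 0 < Nat.totient d := Nat.totient_pos.mpr hd
  have hφm : 0 < Nat.totient (d * q' * r') := Nat.totient_pos.mpr hmpos
  have h3 : Nat.totient (d * (d * q' * r')) = Nat.totient (d * q' * r') * d := by
    apply Nat.eq_of_mul_eq_mul_left hφd
    rw [h2]; ring
  rw [h3] at h1
  have h4 : Nat.totient d * Nat.totient (d * q' * r')
      = Nat.totient (d * q') * Nat.totient (d * r') := by
    apply Nat.eq_of_mul_eq_mul_right hd
    calc Nat.totient d * Nat.totient (d * q' * r') * d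
        = Nat.totient d * (Nat.totient (d * q' * r') * d) := by ring
      _ = Nat.totient (d * q') * Nat.totient (d * r') * d := h1
  apply Nat.eq_of_mul_eq_mul_left hφm
  rw [← hsum, ← h4]; ring

private lemma point_eq (d q' r' : ℕ) (hd : 0 < d) (hq' : 0 < q') (hr' : 0 < r')
    (a b c : ℕ) (hc : (a * r' + b * q') % (d * q' * r') = c) :
    (((a : ℚ) / ((d * q' : ℕ) : ℚ) : ℚ) : AddCircle (1 : ℚ))
      + (((b : ℚ) / ((d * r' : ℕ) : ℚ) : ℚ) : AddCircle (1 : ℚ))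
      = (((c : ℚ) / ((d * q' * r' : ℕ) : ℚ) : ℚ) : AddCircle (1 : ℚ)) := by
  have hd0 : (d : ℚ) ≠ 0 := Nat.cast_ne_zero.mpr hd.ne'
  have hq0 : (q' : ℚ) ≠ 0 := Nat.cast_ne_zero.mpr hq'.ne'
  have hr0 : (r' : ℚ) ≠ 0 := Nat.cast_ne_zero.mpr hr'.ne'
  set N := a * r' + b * q' with hN
  set k := N / (d * q' * r') with hk
  have hNmk : (d * q' * r') * k + c = N := by
    rw [hk, ← hc]
    exact Nat.div_add_mod N (d * q' * r')
  have h1 : (a : ℚ) / ((d * q' : ℕ) : ℚ) + (b : ℚ) / ((d * r' : ℕ) : ℚ)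
      = ((N : ℕ) : ℚ) / ((d * q' * r' : ℕ) : ℚ) := by
    rw [hN]
    push_cast
    field_simp
  rw [← AddCircle.coe_add, h1]
  rw [QuotientAddGroup.eq_iff_sub_mem]
  refine AddSubgroup.mem_zmultiples_iff.mpr ⟨(k : ℤ), ?_⟩
  rw [zsmul_one]
  have hNq : ((N : ℕ) : ℚ) = ((d * q' * r' : ℕ) : ℚ) * ((k : ℕ) : ℚ) + (c : ℚ) := by
    exact_mod_cast congrArg (fun x : ℕ => (x : ℚ)) hNmk.symm
  rw [hNq]
  push_cast
  field_simp
  ring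

private lemma core (d q' r' : ℕ) (hd : 0 < d) (hq' : 0 < q') (hr' : 0 < r')
    (hco : Nat.Coprime q' r')
    (hyp : ∀ p : ℕ, p.Prime → p ∣ d → p ∣ q' ∨ p ∣ r') :
    F (d * q') * F (d * r') = (Nat.totient d : ℤ) • F (d * q' * r') := by
  have hmpos : 0 < d * q' * r' := by positivity
  have hmaps : ∀ p ∈ Aset (d * q') ×ˢ Aset (d * r'),
      (p.1 * r' + p.2 * q') % (d * q' * r') ∈ Aset (d * q' * r') := by
    rintro ⟨a, b⟩ hp
    rw [Finset.mem_product, mem_Aset, mem_Aset] at hp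
    obtain ⟨⟨haq, hacop⟩, hbr, hbcop⟩ := hp
    rw [mem_Aset]
    exact ⟨Nat.mod_lt _ hmpos, cop_mod (coprime_sum d q' r' hco hyp a b hacop hbcop)⟩
  unfold F
  rw [Finset.sum_mul_sum]
  simp_rw [AddMonoidAlgebra.single_mul_single, mul_one]
  rw [← Finset.sum_product']
  have hAq : (Finset.range (d * q')).filter (fun a => Nat.Coprime a (d * q'))
      = Aset (d * q') := rfl
  have hAr : (Finset.range (d * r')).filter (fun a => Nat.Coprime a (d * r'))
      = Aset (d * r') := rfl
  have hAm : (Finset.range (d * q' * r')).filter (fun a => Nat.Coprime a (d * q' * r'))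
      = Aset (d * q' * r') := rfl
  rw [hAq, hAr, hAm]
  rw [← Finset.sum_fiberwise_of_maps_to hmaps
    (fun p : ℕ × ℕ => AddMonoidAlgebra.single
      ((((p.1 : ℚ) / ((d * q' : ℕ) : ℚ) : ℚ) : AddCircle (1 : ℚ))
        + (((p.2 : ℚ) / ((d * r' : ℕ) : ℚ) : ℚ) : AddCircle (1 : ℚ))) (1 : ℤ))]
  rw [Finset.smul_sum]
  apply Finset.sum_congr rfl
  intro c hc
  rw [mem_Aset] at hc
  have hstep : ∀ p ∈ (Aset (d * q') ×ˢ Aset (d * r')).filter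
      (fun p : ℕ × ℕ => (p.1 * r' + p.2 * q') % (d * q' * r') = c),
      AddMonoidAlgebra.single
        ((((p.1 : ℚ) / ((d * q' : ℕ) : ℚ) : ℚ) : AddCircle (1 : ℚ))
          + (((p.2 : ℚ) / ((d * r' : ℕ) : ℚ) : ℚ) : AddCircle (1 : ℚ))) (1 : ℤ)
      = AddMonoidAlgebra.single (((c : ℚ) / ((d * q' * r' : ℕ) : ℚ) : ℚ) : AddCircle (1 : ℚ))
          (1 : ℤ) := by
    rintro ⟨a, b⟩ hp
    rw [Finset.mem_filter] at hp
    rw [point_eq d q' r' hd hq' hr' a b c hp.2]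
  rw [Finset.sum_congr rfl hstep, Finset.sum_const]
  have hcard : ((Aset (d * q') ×ˢ Aset (d * r')).filter
      (fun p : ℕ × ℕ => (p.1 * r' + p.2 * q') % (d * q' * r') = c)).card
      = Nat.totient d := fib_card d q' r' hd hq' hr' hco hyp c hc.1 hc.2
  rw [hcard, ← natCast_zsmul]

theorem stmt_4 (q r : ℕ) (hq : 0 < q) (hr : 0 < r)
    (h : ∀ p : ℕ, p.Prime → p ∣ Nat.gcd q r →
      p ∣ q / Nat.gcd q r ∨ p ∣ r / Nat.gcd q r) :
    F q * F r = (Nat.totient (Nat.gcd q r) : ℤ) • F (q * r / Nat.gcd q r) := by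
  set d := Nat.gcd q r with hd
  have hdpos : 0 < d := Nat.gcd_pos_of_pos_left r hq
  have hdq : d ∣ q := Nat.gcd_dvd_left q r
  have hdr : d ∣ r := Nat.gcd_dvd_right q r
  set q' := q / d with hq'
  set r' := r / d with hr'
  have hqq : q = d * q' := (Nat.mul_div_cancel' hdq).symm
  have hrr : r = d * r' := (Nat.mul_div_cancel' hdr).symm
  have hq'pos : 0 < q' := Nat.div_pos (Nat.le_of_dvd hq hdq) hdpos
  have hr'pos : 0 < r' := Nat.div_pos (Nat.le_of_dvd hr hdr) hdpos
  have hco : Nat.Coprime q' r' := Nat.coprime_div_gcd_div_gcd hdpos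
  have hm : q * r / d = d * q' * r' := by
    rw [hqq, hrr, show d * q' * (d * r') = d * (d * q' * r') by ring]
    exact Nat.mul_div_cancel_left _ hdpos
  rw [hm, hqq, hrr]
  exact core d q' r' hdpos hq'pos hr'pos hco h
end

section
/- Let Q and k be positive integers and let F_Q = {β ∈ ℚ/ℤ : ord(β) ≤ Q}. Then the k-fold sumset F_Q + ⋯ + F_Q equals the set of all β ∈ ℚ/ℤ such that ord(β) = n₁·n₂⋯n_k for some positive integers n₁, …, n_k ≤ Q that are pairwise coprime. -/
open Finset

private lemma addCircle_rat_order_pos (β : AddCircle (1 : ℚ)) : 0 < addOrderOf β := by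
  haveI : Fact ((0:ℚ) < 1) := ⟨one_pos⟩
  refine QuotientAddGroup.induction_on β fun q => ?_
  have h := AddCircle.addOrderOf_coe_rat (p := (1 : ℚ)) (q := q)
  rw [Rat.cast_id, mul_one] at h
  rw [h]
  exact q.pos

private lemma nat_prod_dvd_of_coprime {ι : Type*} [DecidableEq ι] {t : Finset ι} {s : ι → ℕ}
    {z : ℕ} (h : ∀ i ∈ t, ∀ j ∈ t, i ≠ j → Nat.Coprime (s i) (s j))
    (hd : ∀ i ∈ t, s i ∣ z) : (∏ i ∈ t, s i) ∣ z := by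
  induction t using Finset.induction_on with
  | empty => simpa using one_dvd z
  | @insert a r ha ih =>
    rw [Finset.prod_insert ha]
    have hcop : Nat.Coprime (s a) (∏ i ∈ r, s i) :=
      Nat.Coprime.prod_right fun i hi =>
        h a (mem_insert_self a r) i (mem_insert_of_mem hi) fun he => ha (he ▸ hi)
    exact hcop.mul_dvd_of_dvd_of_dvd (hd a (mem_insert_self a r))
      (ih (fun i hi j hj hij => h i (mem_insert_of_mem hi) j (mem_insert_of_mem hj) hij)
          (fun i hi => hd i (mem_insert_of_mem hi)))

private lemma exists_sum_eq_gcd' {ι : Type*} [DecidableEq ι] (t : Finset ι) (g : ι → ℕ) :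
    ∃ c : ι → ℤ, ∑ i ∈ t, c i * (g i : ℤ) = ((t.gcd g : ℕ) : ℤ) := by
  induction t using Finset.induction_on with
  | empty => exact ⟨0, by simp⟩
  | @insert a r ha ih =>
    obtain ⟨c, hc⟩ := ih
    refine ⟨fun i => if i = a then Nat.gcdA (g a) (r.gcd g) else c i * Nat.gcdB (g a) (r.gcd g),
      ?_⟩
    rw [Finset.sum_insert ha, Finset.gcd_insert, gcd_eq_nat_gcd, Nat.gcd_eq_gcd_ab]
    simp only [eq_self_iff_true, if_true]
    have key : ∑ x ∈ r,
          (if x = a then Nat.gcdA (g a) (r.gcd g) else c x * Nat.gcdB (g a) (r.gcd g)) * (g x : ℤ)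
        = (∑ i ∈ r, c i * (g i : ℤ)) * Nat.gcdB (g a) (r.gcd g) := by
      rw [Finset.sum_mul]
      refine Finset.sum_congr rfl fun i hi => ?_
      rw [if_neg (fun (he : i = a) => ha (he ▸ hi))]
      ring
    rw [key, hc]
    ring

private lemma finset_lcm_ne_zero {ι : Type*} [DecidableEq ι] {t : Finset ι} {g : ι → ℕ}
    (h : ∀ i ∈ t, g i ≠ 0) : t.lcm g ≠ 0 := by
  induction t using Finset.induction_on with
  | empty => simp
  | @insert a r ha ih =>
    rw [Finset.lcm_insert, lcm_eq_nat_lcm]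
    exact Nat.lcm_ne_zero (h a (mem_insert_self a r)) (ih fun i hi => h i (mem_insert_of_mem hi))

private lemma pow_dvd_lcm_cases {ι : Type*} [DecidableEq ι] {p : ℕ} (hp : p.Prime) (g : ι → ℕ)
    (a : ℕ) (t : Finset ι) :
    (∀ i ∈ t, g i ≠ 0) → p ^ a ∣ t.lcm g → a = 0 ∨ ∃ i ∈ t, p ^ a ∣ g i := by
  induction t using Finset.induction_on with
  | empty =>
    intro _ h
    rw [Finset.lcm_empty] at h
    have h1 : p ^ a = 1 := Nat.dvd_one.mp h
    left
    by_contra h2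
    exact hp.one_lt.ne' (Nat.dvd_one.mp (h1 ▸ dvd_pow_self p h2))
  | @insert x r hx ih =>
    intro hg h
    rw [Finset.lcm_insert, lcm_eq_nat_lcm] at h
    have hgx : g x ≠ 0 := hg x (mem_insert_self x r)
    have hr : r.lcm g ≠ 0 := finset_lcm_ne_zero fun i hi => hg i (mem_insert_of_mem hi)
    have hle := (Nat.Prime.pow_dvd_iff_le_factorization hp (Nat.lcm_ne_zero hgx hr)).mp h
    rw [Nat.factorization_lcm hgx hr, Finsupp.sup_apply] at hle
    rcases le_sup_iff.mp hle with hle' | hle'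
    · exact Or.inr ⟨x, mem_insert_self x r,
        (Nat.Prime.pow_dvd_iff_le_factorization hp hgx).mpr hle'⟩
    · rcases ih (fun i hi => hg i (mem_insert_of_mem hi))
        ((Nat.Prime.pow_dvd_iff_le_factorization hp hr).mpr hle') with h0 | ⟨i, hi, hdvd⟩
      · exact Or.inl h0
      · exact Or.inr ⟨i, mem_insert_of_mem hi, hdvd⟩

theorem stmt_10 (Q k : ℕ) (hQ : 0 < Q) (hk : 0 < k) :
    {β : AddCircle (1 : ℚ) | ∃ f : Fin k → AddCircle (1 : ℚ),
        (∀ i, addOrderOf (f i) ≤ Q) ∧ β = ∑ i, f i}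
      = {β : AddCircle (1 : ℚ) | ∃ n : Fin k → ℕ,
          (∀ i, 0 < n i ∧ n i ≤ Q) ∧
          (∀ i j, i ≠ j → Nat.Coprime (n i) (n j)) ∧
          addOrderOf β = ∏ i, n i} := by
  classical
  ext β
  simp only [Set.mem_setOf_eq]
  constructor
  · rintro ⟨f, hf, rfl⟩
    set m := addOrderOf (∑ i, f i) with hm
    have hfpos : ∀ i, 0 < addOrderOf (f i) := fun i => addCircle_rat_order_pos _
    have hmpos : 0 < m := addCircle_rat_order_pos _
    set L := univ.lcm (fun i => addOrderOf (f i)) with hL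
    have hmL : m ∣ L := by
      rw [addOrderOf_dvd_iff_nsmul_eq_zero, Finset.smul_sum]
      exact Finset.sum_eq_zero fun i _ =>
        addOrderOf_dvd_iff_nsmul_eq_zero.mp (Finset.dvd_lcm (mem_univ i))
    have hchoice : ∀ p ∈ m.primeFactors,
        ∃ i : Fin k, p ^ m.factorization p ∣ addOrderOf (f i) := by
      intro p hp
      have hpp := Nat.prime_of_mem_primeFactors hp
      have hdvd : p ^ m.factorization p ∣ L := (Nat.ordProj_dvd m p).trans hmL
      rcases pow_dvd_lcm_cases hpp _ _ _ (fun i _ => (hfpos i).ne') hdvd with h0 | ⟨i, _, hi⟩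
      · have : m.factorization p ≠ 0 := by
          rw [← Nat.support_factorization] at hp
          exact Finsupp.mem_support_iff.mp hp
        exact absurd h0 this
      · exact ⟨i, hi⟩
    set cho : ℕ → Fin k := fun p =>
      if h : ∃ i : Fin k, p ^ m.factorization p ∣ addOrderOf (f i) then h.choose else ⟨0, hk⟩
      with hcho
    set n : Fin k → ℕ := fun i =>
      ∏ p ∈ m.primeFactors.filter (fun p => cho p = i), p ^ m.factorization p with hn
    have hdvd : ∀ i, n i ∣ addOrderOf (f i) := by
      intro i
      refine nat_prod_dvd_of_coprime ?_ ?_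
      · intro p hp q hq hpq
        exact Nat.Coprime.pow _ _ ((Nat.coprime_primes
          (Nat.prime_of_mem_primeFactors (Finset.mem_filter.mp hp).1)
          (Nat.prime_of_mem_primeFactors (Finset.mem_filter.mp hq).1)).mpr hpq)
      · intro p hp
        obtain ⟨hp1, hp2⟩ := Finset.mem_filter.mp hp
        have hex := hchoice p hp1
        have hd : p ^ m.factorization p ∣ addOrderOf (f (cho p)) := by
          simp only [hcho, dif_pos hex]
          exact hex.choose_spec
        rwa [hp2] at hd
    refine ⟨n, fun i => ⟨?_, ?_⟩, ?_, ?_⟩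
    · exact Finset.prod_pos fun p hp =>
        pow_pos (Nat.prime_of_mem_primeFactors (Finset.mem_filter.mp hp).1).pos _
    · exact (Nat.le_of_dvd (hfpos i) (hdvd i)).trans (hf i)
    · intro i j hij
      refine Nat.Coprime.prod_left fun p hp => Nat.Coprime.prod_right fun q hq => ?_
      refine Nat.Coprime.pow _ _ ((Nat.coprime_primes
        (Nat.prime_of_mem_primeFactors (Finset.mem_filter.mp hp).1)
        (Nat.prime_of_mem_primeFactors (Finset.mem_filter.mp hq).1)).mpr ?_)
      rintro rfl
      exact hij ((Finset.mem_filter.mp hp).2 ▸ (Finset.mem_filter.mp hq).2)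
    · rw [hn]
      rw [Finset.prod_fiberwise m.primeFactors cho (fun p => p ^ m.factorization p)]
      have h2 : ∏ p ∈ m.primeFactors, p ^ m.factorization p = m := by
        simpa [Finsupp.prod] using Nat.factorization_prod_pow_eq_self hmpos.ne'
      rw [h2]
  · rintro ⟨n, hn, hcop, hord⟩
    set N := ∏ i, n i with hNdef
    have hNpos : 0 < N := Finset.prod_pos fun i _ => (hn i).1
    set g : Fin k → ℕ := fun i => ∏ j ∈ univ.erase i, n j with hgdef
    have hNg : ∀ i, n i * g i = N := fun i => Finset.mul_prod_erase univ n (mem_univ i)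
    have hgcd : univ.gcd g = 1 := by
      refine Nat.eq_one_iff_not_exists_prime_dvd.mpr fun p hp hpd => ?_
      obtain ⟨j, hj, hjp⟩ := (Nat.Prime.prime hp).exists_mem_finset_dvd
        (hpd.trans (Finset.gcd_dvd (mem_univ (⟨0, hk⟩ : Fin k))))
      obtain ⟨l, hl, hlp⟩ := (Nat.Prime.prime hp).exists_mem_finset_dvd
        (hpd.trans (Finset.gcd_dvd (mem_univ j)))
      have hlj : l ≠ j := (Finset.mem_erase.mp hl).1
      have h1 : p ∣ 1 := (hcop j l hlj.symm : Nat.gcd (n j) (n l) = 1) ▸ Nat.dvd_gcd hjp hlp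
      exact absurd (Nat.dvd_one.mp h1) hp.one_lt.ne'
    obtain ⟨c, hc⟩ := exists_sum_eq_gcd' univ g
    rw [hgcd, Nat.cast_one] at hc
    have hNβ : (N : ℤ) • β = 0 := by
      rw [natCast_zsmul]
      exact hord ▸ addOrderOf_nsmul_eq_zero β
    refine ⟨fun i => (c i * (g i : ℤ)) • β, ?_, ?_⟩
    · intro i
      have hz : n i • ((c i * (g i : ℤ)) • β) = 0 := by
        rw [← natCast_zsmul, smul_smul]
        have he : (n i : ℤ) * (c i * (g i : ℤ)) = c i * (N : ℤ) := by
          rw [← hNg i]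
          push_cast
          ring
        rw [he, mul_smul, hNβ, smul_zero]
      exact (Nat.le_of_dvd (hn i).1 (addOrderOf_dvd_iff_nsmul_eq_zero.mpr hz)).trans (hn i).2
    · rw [← Finset.sum_smul, hc, one_smul]
end

section
/- Let Q be a positive integer and F_Q = {β ∈ ℚ/ℤ : ord(β) ≤ Q}. Then F_Q + F_Q = {β ∈ ℚ/ℤ : ∃ m, n ≤ Q with gcd(m, n) = 1 and ord(β) = m·n}. -/
lemma torsion_qcircle (g : AddCircle (1 : ℚ)) : IsOfFinAddOrder g := by
  obtain ⟨q, rfl⟩ := QuotientAddGroup.mk_surjective g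
  refine isOfFinAddOrder_iff_nsmul_eq_zero.mpr ⟨q.den, q.pos, ?_⟩
  have : q.den • q = ((q.num : ℚ)) := by
    rw [nsmul_eq_mul, mul_comm]
    exact_mod_cast Rat.mul_den_eq_num q
  show (QuotientAddGroup.mk (q.den • q) : AddCircle (1:ℚ)) = 0
  rw [QuotientAddGroup.eq_zero_iff]
  refine ⟨q.num, ?_⟩
  simpa using this.symm

theorem stmt_11 (Q : ℕ) (hQ : 0 < Q) :
    {β : AddCircle (1 : ℚ) | ∃ b₁ b₂ : AddCircle (1 : ℚ),
        addOrderOf b₁ ≤ Q ∧ addOrderOf b₂ ≤ Q ∧ β = b₁ + b₂}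
      = {β : AddCircle (1 : ℚ) | ∃ m n : ℕ,
          0 < m ∧ 0 < n ∧ m ≤ Q ∧ n ≤ Q ∧ Nat.Coprime m n ∧ addOrderOf β = m * n} := by
  ext β
  simp only [Set.mem_setOf_eq]
  constructor
  · rintro ⟨b₁, b₂, h1, h2, rfl⟩
    set a := addOrderOf b₁ with hadef
    set b := addOrderOf b₂ with hbdef
    have ha : 0 < a := (torsion_qcircle b₁).addOrderOf_pos
    have hb : 0 < b := (torsion_qcircle b₂).addOrderOf_pos
    set k := addOrderOf (b₁ + b₂) with hkdef
    have hk : k ∣ Nat.lcm a b := (AddCommute.all b₁ b₂).addOrderOf_add_dvd_lcm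
    set M := Nat.factorizationLCMLeft a b with hM
    set N := Nat.factorizationLCMRight a b with hN
    have hMN : M * N = Nat.lcm a b :=
      Nat.factorizationLCMLeft_mul_factorizationLCMRight ha.ne' hb.ne'
    have hcop : Nat.Coprime M N :=
      Nat.coprime_factorizationLCMLeft_factorizationLCMRight a b
    have hkMN : k ∣ M * N := hMN ▸ hk
    have hkey : Nat.gcd k M * Nat.gcd k N = k :=
      (Nat.gcd_mul_gcd_eq_iff_dvd_mul_of_coprime hcop).mpr hkMN
    have hkpos : 0 < k :=
      Nat.pos_of_dvd_of_pos hk (Nat.pos_of_ne_zero (Nat.lcm_ne_zero ha.ne' hb.ne'))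
    refine ⟨Nat.gcd k M, Nat.gcd k N, ?_, ?_, ?_, ?_, ?_, hkey.symm⟩
    · exact Nat.pos_of_dvd_of_pos (Nat.gcd_dvd_left _ _) hkpos
    · exact Nat.pos_of_dvd_of_pos (Nat.gcd_dvd_left _ _) hkpos
    · exact le_trans (Nat.le_of_dvd ha
        ((Nat.gcd_dvd_right _ _).trans (Nat.factorizationLCMLeft_dvd_left a b))) h1
    · exact le_trans (Nat.le_of_dvd hb
        ((Nat.gcd_dvd_right _ _).trans (Nat.factorizationLCMRight_dvd_right a b))) h2
    · exact Nat.Coprime.coprime_dvd_left (Nat.gcd_dvd_right _ _)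
        (Nat.Coprime.coprime_dvd_right (Nat.gcd_dvd_right _ _) hcop)
  · rintro ⟨m, n, hm, hn, hmQ, hnQ, hco, hord⟩
    have hbez : (1 : ℤ) = m * Nat.gcdA m n + n * Nat.gcdB m n := by
      have := Nat.gcd_eq_gcd_ab m n
      rw [hco.gcd_eq_one] at this
      exact_mod_cast this
    have hzero : ((m * n : ℕ) : ℤ) • β = 0 := by
      rw [natCast_zsmul, ← hord]
      exact addOrderOf_nsmul_eq_zero β
    refine ⟨((m : ℤ) * Nat.gcdA m n) • β, ((n : ℤ) * Nat.gcdB m n) • β, ?_, ?_, ?_⟩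
    · refine le_trans (Nat.le_of_dvd hn ?_) hnQ
      apply addOrderOf_dvd_of_nsmul_eq_zero
      rw [← natCast_zsmul, smul_smul]
      have : (n : ℤ) * ((m : ℤ) * Nat.gcdA m n) = Nat.gcdA m n * ((m * n : ℕ) : ℤ) := by
        push_cast; ring
      rw [this, ← smul_smul, hzero, smul_zero]
    · refine le_trans (Nat.le_of_dvd hm ?_) hmQ
      apply addOrderOf_dvd_of_nsmul_eq_zero
      rw [← natCast_zsmul, smul_smul]
      have : (m : ℤ) * ((n : ℤ) * Nat.gcdB m n) = Nat.gcdB m n * ((m * n : ℕ) : ℤ) := by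
        push_cast; ring
      rw [this, ← smul_smul, hzero, smul_zero]
    · rw [← add_zsmul, ← hbez, one_zsmul]
end

section
/- Let Q be a positive integer, F_Q = {β ∈ ℚ/ℤ : ord(β) ≤ Q}, and for n ∈ ℕ let τ*_Q(n) = #{d : d | n, d ≤ Q, n/d ≤ Q, gcd(d, n/d) = 1}. Then |F_Q + F_Q| = ∑_{n ≤ Q², τ*_Q(n) ≥ 1} φ(n), where φ is Euler's totient function. -/
open Nat

lemma keyA {n m₁ m₂ : ℕ} (hm₁ : m₁ ≠ 0) (hm₂ : m₂ ≠ 0) (h : n ∣ Nat.lcm m₁ m₂) :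
    ∃ d e, d * e = n ∧ d ∣ m₁ ∧ e ∣ m₂ ∧ Nat.Coprime d e := by
  refine ⟨n.gcd (Nat.factorizationLCMLeft m₁ m₂), n.gcd (Nat.factorizationLCMRight m₁ m₂),
    ?_, (Nat.gcd_dvd_right _ _).trans (Nat.factorizationLCMLeft_dvd_left _ _),
    (Nat.gcd_dvd_right _ _).trans (Nat.factorizationLCMRight_dvd_right _ _),
    Nat.Coprime.coprime_dvd_left (Nat.gcd_dvd_right _ _)
      (Nat.Coprime.coprime_dvd_right (Nat.gcd_dvd_right _ _)
        (Nat.coprime_factorizationLCMLeft_factorizationLCMRight m₁ m₂))⟩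
  refine (Nat.gcd_mul_gcd_eq_iff_dvd_mul_of_coprime
    (Nat.coprime_factorizationLCMLeft_factorizationLCMRight m₁ m₂)).mpr ?_
  rwa [Nat.factorizationLCMLeft_mul_factorizationLCMRight hm₁ hm₂]

lemma ord_pos (b : AddCircle (1 : ℚ)) : 0 < addOrderOf b := by
  induction b using QuotientAddGroup.induction_on with
  | H q =>
    have h := AddCircle.addOrderOf_coe_rat (p := (1 : ℚ)) (q := q)
    simp only [Rat.cast_id, mul_one] at h
    rw [h]
    exact q.pos

lemma mem_iff (Q : ℕ) (hQ : 0 < Q) (β : AddCircle (1 : ℚ)) :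
    (∃ b₁ b₂ : AddCircle (1 : ℚ), addOrderOf b₁ ≤ Q ∧ addOrderOf b₂ ≤ Q ∧ β = b₁ + b₂)
    ↔ addOrderOf β ∈ (Finset.Icc 1 (Q ^ 2)).filter
        (fun n => ∃ d ∈ n.divisors, d ≤ Q ∧ n / d ≤ Q ∧ Nat.gcd d (n / d) = 1) := by
  constructor
  · rintro ⟨b₁, b₂, h₁, h₂, rfl⟩
    have hm₁ : 0 < addOrderOf b₁ := ord_pos b₁
    have hm₂ : 0 < addOrderOf b₂ := ord_pos b₂
    have hdvd : addOrderOf (b₁ + b₂) ∣ Nat.lcm (addOrderOf b₁) (addOrderOf b₂) := by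
      apply addOrderOf_dvd_of_nsmul_eq_zero
      rw [smul_add, addOrderOf_dvd_iff_nsmul_eq_zero.mp (Nat.dvd_lcm_left _ _),
        addOrderOf_dvd_iff_nsmul_eq_zero.mp (Nat.dvd_lcm_right _ _), add_zero]
    obtain ⟨d, e, hde, hd1, he1, hcop⟩ := keyA hm₁.ne' hm₂.ne' hdvd
    have hn : 0 < addOrderOf (b₁ + b₂) := ord_pos _
    have hd0 : 0 < d := Nat.pos_of_dvd_of_pos (Dvd.intro _ hde) (hde ▸ hn)
    have hdQ : d ≤ Q := (Nat.le_of_dvd hm₁ hd1).trans h₁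
    have heQ : e ≤ Q := (Nat.le_of_dvd hm₂ he1).trans h₂
    have hnd : addOrderOf (b₁ + b₂) / d = e := by
      rw [← hde, Nat.mul_div_cancel_left _ hd0]
    refine Finset.mem_filter.mpr ⟨Finset.mem_Icc.mpr ⟨hn, ?_⟩,
      d, Nat.mem_divisors.mpr ⟨Dvd.intro _ hde, hn.ne'⟩, hdQ, ?_, ?_⟩
    · calc addOrderOf (b₁ + b₂) = d * e := hde.symm
        _ ≤ Q * Q := Nat.mul_le_mul hdQ heQ
        _ = Q ^ 2 := (sq Q).symm
    · rw [hnd]; exact heQ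
    · rw [hnd]; exact hcop
  · intro h
    obtain ⟨hIcc, d, hdmem, hdQ, heQ, hcop⟩ := Finset.mem_filter.mp h
    set n := addOrderOf β with hn_def
    obtain ⟨hd, hn0⟩ := Nat.mem_divisors.mp hdmem
    set e := n / d with he_def
    have hde : d * e = n := Nat.mul_div_cancel' hd
    have hd0 : 0 < d := Nat.pos_of_dvd_of_pos hd (Nat.pos_of_ne_zero hn0)
    have he0 : 0 < e :=
      Nat.div_pos (Nat.le_of_dvd (Nat.pos_of_ne_zero hn0) hd) hd0
    have hnβ : (n : ℤ) • β = 0 := by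
      rw [natCast_zsmul]; exact addOrderOf_nsmul_eq_zero β
    have hbez : ((e : ℤ) * Nat.gcdB d e) + ((d : ℤ) * Nat.gcdA d e) = 1 := by
      have hg := Nat.gcd_eq_gcd_ab d e
      rw [hcop] at hg
      push_cast at hg ⊢
      linarith
    refine ⟨((e : ℤ) * Nat.gcdB d e) • β, ((d : ℤ) * Nat.gcdA d e) • β, ?_, ?_, ?_⟩
    · have hz : d • (((e : ℤ) * Nat.gcdB d e) • β) = 0 := by
        rw [← natCast_zsmul, smul_smul,
          show (d : ℤ) * ((e : ℤ) * Nat.gcdB d e) = Nat.gcdB d e * (n : ℤ) by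
            push_cast [← hde]; ring,
          ← smul_smul, hnβ, smul_zero]
      exact (Nat.le_of_dvd hd0 (addOrderOf_dvd_of_nsmul_eq_zero hz)).trans hdQ
    · have hz : e • (((d : ℤ) * Nat.gcdA d e) • β) = 0 := by
        rw [← natCast_zsmul, smul_smul,
          show (e : ℤ) * ((d : ℤ) * Nat.gcdA d e) = Nat.gcdA d e * (n : ℤ) by
            push_cast [← hde]; ring,
          ← smul_smul, hnβ, smul_zero]
      exact (Nat.le_of_dvd he0 (addOrderOf_dvd_of_nsmul_eq_zero hz)).trans heQ
    · rw [← add_zsmul, hbez, one_zsmul]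

theorem stmt_12 (Q : ℕ) (hQ : 0 < Q) :
    Nat.card {β : AddCircle (1 : ℚ) | ∃ b₁ b₂ : AddCircle (1 : ℚ),
        addOrderOf b₁ ≤ Q ∧ addOrderOf b₂ ≤ Q ∧ β = b₁ + b₂}
      = ∑ n ∈ (Finset.Icc 1 (Q ^ 2)).filter
          (fun n => ∃ d ∈ n.divisors, d ≤ Q ∧ n / d ≤ Q ∧ Nat.gcd d (n / d) = 1),
          Nat.totient n := by
  classical
  haveI : Fact ((0 : ℚ) < 1) := ⟨one_pos⟩
  set T := (Finset.Icc 1 (Q ^ 2)).filter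
      (fun n => ∃ d ∈ n.divisors, d ≤ Q ∧ n / d ≤ Q ∧ Nat.gcd d (n / d) = 1) with hT
  have hset : {β : AddCircle (1 : ℚ) | ∃ b₁ b₂ : AddCircle (1 : ℚ),
      addOrderOf b₁ ≤ Q ∧ addOrderOf b₂ ≤ Q ∧ β = b₁ + b₂}
      = {β : AddCircle (1 : ℚ) | addOrderOf β ∈ T} :=
    Set.ext fun β => mem_iff Q hQ β
  rw [hset]
  have E : {β : AddCircle (1 : ℚ) | addOrderOf β ∈ T} ≃
      (Σ n : T, {u : AddCircle (1 : ℚ) // addOrderOf u = (n : ℕ)}) :=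
    { toFun := fun β => ⟨⟨addOrderOf β.1, β.2⟩, ⟨β.1, rfl⟩⟩
      invFun := fun x => ⟨x.2.1, by
        have h2 := x.2.2
        show addOrderOf x.2.1 ∈ T
        rw [h2]; exact x.1.2⟩
      left_inv := fun β => rfl
      right_inv := by rintro ⟨⟨n, hn⟩, u, hu⟩; dsimp at hu; subst hu; rfl }
  have hfin : ∀ n : T, Finite {u : AddCircle (1 : ℚ) // addOrderOf u = (n : ℕ)} := by
    rintro ⟨n, hn⟩
    have hn1 : 0 < n := (Finset.mem_Icc.mp (Finset.mem_filter.mp hn).1).1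
    exact (AddCircle.finite_setOfPred_addOrderOf_eq (p := (1 : ℚ)) hn1).to_subtype
  haveI := hfin
  haveI : ∀ n : T, Fintype {u : AddCircle (1 : ℚ) // addOrderOf u = (n : ℕ)} :=
    fun n => Fintype.ofFinite _
  rw [Nat.card_congr E, Nat.card_eq_fintype_card, Fintype.card_sigma]
  rw [← Finset.sum_coe_sort T Nat.totient]
  refine Finset.sum_congr rfl fun n _ => ?_
  rw [← Nat.card_eq_fintype_card, AddCircle.card_addOrderOf_eq_totient (p := (1 : ℚ))]
end
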